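/- Let x, c be linearly independent vectors in a real inner product space with ‖x‖ = ‖c‖ (or general nonzero), and for M ≥ 0 define g(M) = ⟪(1+M)x − Mc, c⟫ / ‖(1+M)x − Mc‖. Then g is monotonically nonincreasing in M on [0, ∞). -/

import Mathlib

open RealInnerProductSpace

theorem stmt_12 {E : Type*} [NormedAddCommGroup E] [InnerProductSpace ℝ E]
    (x c : E) (hx : x ≠ 0) (hc : c ≠ 0) (hli : LinearIndependent ℝ ![x, c]) :
    AntitoneOn (fun M : ℝ => ⟪(1 + M) • x - M • c, c⟫ / ‖(1 + M) • x - M • c‖)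
      (Set.Ici 0) := by
  set p : ℝ := ⟪x, c⟫ with hp
  set q : ℝ := ‖x‖ ^ 2 with hq
  set s : ℝ := ‖c‖ ^ 2 with hs
  have hpair := LinearIndependent.pair_iff.1 hli
  -- strict Cauchy-Schwarz
  have hCS : p ^ 2 < q * s := by
    have h1 : p < ‖x‖ * ‖c‖ := by
      rw [inner_lt_norm_mul_iff_real]
      intro h
      have := hpair ‖c‖ (-‖x‖) (by rw [h, ← add_smul, add_neg_cancel, zero_smul])
      exact hc (norm_eq_zero.1 this.1)
    have h2 : -(‖x‖ * ‖c‖) < p := by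
      have : ⟪-x, c⟫ < ‖(-x : E)‖ * ‖c‖ := by
        rw [inner_lt_norm_mul_iff_real]
        intro h
        rw [smul_neg, norm_neg] at h
        have := hpair ‖c‖ ‖x‖ (by rw [← h, add_neg_cancel])
        exact hc (norm_eq_zero.1 this.1)
      rw [inner_neg_left, norm_neg] at this
      linarith
    have habs : |p| < ‖x‖ * ‖c‖ := abs_lt.2 ⟨h2, h1⟩
    calc p ^ 2 = |p| ^ 2 := (sq_abs p).symm
      _ < (‖x‖ * ‖c‖) ^ 2 := by
          apply pow_lt_pow_left₀ habs (abs_nonneg p) (by norm_num)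
      _ = q * s := by rw [hq, hs]; ring
  have hvne : ∀ M : ℝ, (1 + M) • x - M • c ≠ 0 := by
    intro M h
    have := hpair (1 + M) (-M) (by rw [neg_smul, ← sub_eq_add_neg]; exact h)
    linarith [this.1, this.2]
  set Q : ℝ → ℝ := fun M => q + 2 * (q - p) * M + (q - 2 * p + s) * M ^ 2 with hQdef
  have hQeq : ∀ M : ℝ, ‖(1 + M) • x - M • c‖ ^ 2 = Q M := by
    intro M
    rw [hQdef]
    have := @norm_sub_sq_real E _ _ ((1 + M) • x) (M • c)
    rw [norm_smul, norm_smul, real_inner_smul_left, real_inner_smul_right] at this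
    simp only [Real.norm_eq_abs, mul_pow, sq_abs] at this
    rw [this, hp, hq, hs]; ring
  have hQpos : ∀ M : ℝ, 0 < Q M := by
    intro M
    rw [← hQeq M]
    exact pow_pos (norm_pos_iff.2 (hvne M)) 2
  have hQne : ∀ M : ℝ, Real.sqrt (Q M) ≠ 0 := fun M =>
    (Real.sqrt_pos.2 (hQpos M)).ne'
  have hNeq : ∀ M : ℝ, ⟪(1 + M) • x - M • c, c⟫ = p + (p - s) * M := by
    intro M
    rw [inner_sub_left, real_inner_smul_left, real_inner_smul_left, hp, hs,
      real_inner_self_eq_norm_sq]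
    ring
  have hnorm : ∀ M : ℝ, ‖(1 + M) • x - M • c‖ = Real.sqrt (Q M) := by
    intro M
    rw [← hQeq M, Real.sqrt_sq (norm_nonneg _)]
  have hfun : (fun M : ℝ => ⟪(1 + M) • x - M • c, c⟫ / ‖(1 + M) • x - M • c‖)
      = fun M : ℝ => (p + (p - s) * M) / Real.sqrt (Q M) := by
    funext M
    rw [hNeq M, hnorm M]
  rw [hfun]
  set g : ℝ → ℝ := fun M => (p + (p - s) * M) / Real.sqrt (Q M) with hgdef
  -- derivative
  have hderiv : ∀ M : ℝ, HasDerivAt g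
      (((p - s) * Real.sqrt (Q M) - (p + (p - s) * M) *
        ((2 * (q - p) + (q - 2 * p + s) * (2 * M)) / (2 * Real.sqrt (Q M)))) /
        (Real.sqrt (Q M)) ^ 2) M := by
    intro M
    have hQd : HasDerivAt Q (2 * (q - p) + (q - 2 * p + s) * (2 * M)) M := by
      have h1 : HasDerivAt (fun M : ℝ => q + 2 * (q - p) * M) (2 * (q - p)) M := by
        simpa using ((hasDerivAt_id M).const_mul (2 * (q - p))).const_add q
      have h2 : HasDerivAt (fun M : ℝ => (q - 2 * p + s) * M ^ 2)
          ((q - 2 * p + s) * (2 * M)) M := by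
        simpa using (hasDerivAt_pow 2 M).const_mul (q - 2 * p + s)
      exact h1.add h2
    have hsq : HasDerivAt (fun M => Real.sqrt (Q M))
        ((2 * (q - p) + (q - 2 * p + s) * (2 * M)) / (2 * Real.sqrt (Q M))) M :=
      hQd.sqrt (hQpos M).ne'
    have hN : HasDerivAt (fun M : ℝ => p + (p - s) * M) (p - s) M := by
      simpa using ((hasDerivAt_id M).const_mul (p - s)).const_add p
    exact hN.div hsq (hQne M)
  have hdiff : Differentiable ℝ g := fun M => (hderiv M).differentiableAt
  apply antitoneOn_of_deriv_nonpos (convex_Ici 0) hdiff.continuous.continuousOn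
    (fun M _ => (hdiff M).differentiableWithinAt)
  intro M hM
  rw [interior_Ici] at hM
  rw [(hderiv M).deriv]
  have hMpos : (0:ℝ) < M := hM
  set r := Real.sqrt (Q M) with hr
  have hrpos : 0 < r := Real.sqrt_pos.2 (hQpos M)
  have hr2 : r ^ 2 = Q M := Real.sq_sqrt (hQpos M).le
  apply div_nonpos_of_nonpos_of_nonneg _ (sq_nonneg r)
  rw [sub_nonpos, ← mul_div_assoc, le_div_iff₀ (by positivity)]
  -- (p - s) * r * (2 r) ≤ (p + (p-s)M) * (Q')  rearranged; multiply forms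
  have key : (p - s) * Q M - (p + (p - s) * M) *
      ((2 * (q - p) + (q - 2 * p + s) * (2 * M)) / 2) = (1 + M) * (p ^ 2 - q * s) := by
    rw [hQdef]; ring
  have hr2' : r * r = Q M := by rw [← hr2]; ring
  have hneg : (1 + M) * (p ^ 2 - q * s) < 0 :=
    mul_neg_of_pos_of_neg (by linarith) (by linarith)
  have hQM : Q M = q + 2 * (q - p) * M + (q - 2 * p + s) * M ^ 2 := by rw [hQdef]
  rw [hQM] at key hr2'
  have hl : (p - s) * r * (2 * r)
      = 2 * ((p - s) * (q + 2 * (q - p) * M + (q - 2 * p + s) * M ^ 2)) := by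
    rw [← hr2']; ring
  rw [hl]
  nlinarith [key, hneg]
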